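/- Let η₁ ≤ ⋯ ≤ η_{n+1} be real numbers with partial sums σ_p = η₁ + ⋯ + η_p. If 1 ≤ p < q ≤ n+1 and σ_p / p = σ_q / q, then η₁ = η₂ = ⋯ = η_q. -/

import Mathlib

/-- equality case of the averaged partial-sum inequality: if
`1 ≤ p < q ≤ n+1` and `σ_p / p = σ_q / q` then `η₁ = ⋯ = η_q`. -/
theorem avg_partial_sum_eq_case (n : ℕ) (η : Fin (n+1) → ℝ) (hmono : Monotone η)
    (p q : ℕ) (hp : 1 ≤ p) (hpq : p < q) (hq : q ≤ n + 1)
    (heq : (∑ i ∈ Finset.range p, if h : i < n + 1 then η ⟨i, h⟩ else 0) / p =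
      (∑ i ∈ Finset.range q, if h : i < n + 1 then η ⟨i, h⟩ else 0) / q) :
    ∀ i j : Fin (n+1), (i : ℕ) < q → (j : ℕ) < q → η i = η j := by
  set f : ℕ → ℝ := fun i => if h : i < n + 1 then η ⟨i, h⟩ else 0 with hf
  have hfη : ∀ i (h : i < n + 1), f i = η ⟨i, h⟩ := by
    intro i h; simp [hf, h, Nat.lt_succ_iff.mp h]
  have hpn : p - 1 < n + 1 := by omega
  set b : Fin (n + 1) := ⟨p - 1, hpn⟩ with hb
  set c : ℝ := η b with hc
  have hple : ∀ i ∈ Finset.range p, f i ≤ c := by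
    intro i hi
    rw [Finset.mem_range] at hi
    rw [hfη i (by omega)]
    exact hmono (by simp [hb]; omega)
  have hqle : ∀ i ∈ Finset.Ico p q, c ≤ f i := by
    intro i hi
    rw [Finset.mem_Ico] at hi
    rw [hfη i (by omega)]
    exact hmono (by simp [hb]; omega)
  have hSp : (∑ i ∈ Finset.range p, f i) ≤ p * c := by
    calc (∑ i ∈ Finset.range p, f i) ≤ ∑ i ∈ Finset.range p, c :=
          Finset.sum_le_sum hple
      _ = p * c := by simp [mul_comm]
  have hT : ((q : ℝ) - p) * c ≤ ∑ i ∈ Finset.Ico p q, f i := by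
    calc ((q : ℝ) - p) * c = ∑ i ∈ Finset.Ico p q, c := by
          rw [Finset.sum_const, Nat.card_Ico, nsmul_eq_mul,
            Nat.cast_sub (le_of_lt hpq)]
      _ ≤ ∑ i ∈ Finset.Ico p q, f i := Finset.sum_le_sum hqle
  have hsplit : (∑ i ∈ Finset.range q, f i) =
      (∑ i ∈ Finset.range p, f i) + ∑ i ∈ Finset.Ico p q, f i := by
    rw [← Finset.sum_range_add_sum_Ico f (le_of_lt hpq)]
  have hp0 : (p : ℝ) ≠ 0 := Nat.cast_ne_zero.mpr (by omega)
  have hq0 : (q : ℝ) ≠ 0 := Nat.cast_ne_zero.mpr (by omega)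
  have hcross : (q : ℝ) * (∑ i ∈ Finset.range p, f i) =
      p * (∑ i ∈ Finset.range q, f i) := by
    field_simp at heq
    linarith [heq]
  have hqp : (0 : ℝ) < (q : ℝ) - p := by
    have : (p : ℝ) < q := by exact_mod_cast hpq
    linarith
  -- derive S p = p * c
  have hSpe : (∑ i ∈ Finset.range p, f i) = p * c := by
    have h1 : ((q : ℝ) - p) * (∑ i ∈ Finset.range p, f i) =
        p * (∑ i ∈ Finset.Ico p q, f i) := by
      rw [hsplit] at hcross; ring_nf at hcross ⊢; linarith
    nlinarith [hSp, hT, (Nat.cast_pos (α := ℝ)).mpr (lt_of_lt_of_le Nat.one_pos hp)]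
  have hTe : (∑ i ∈ Finset.Ico p q, f i) = ((q : ℝ) - p) * c := by
    have h1 : ((q : ℝ) - p) * (∑ i ∈ Finset.range p, f i) =
        p * (∑ i ∈ Finset.Ico p q, f i) := by
      rw [hsplit] at hcross; ring_nf at hcross ⊢; linarith
    rw [hSpe] at h1
    have h2 : (p : ℝ) * (((q : ℝ) - p) * c) = p * (∑ i ∈ Finset.Ico p q, f i) := by
      linear_combination h1
    exact (mul_left_cancel₀ hp0 h2).symm
  have hall : ∀ i < q, f i = c := by
    have h1 : ∀ i ∈ Finset.range p, f i = c := by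
      have := (Finset.sum_eq_sum_iff_of_le hple).mp ?_
      · exact fun i hi => this i hi
      · rw [hSpe]; simp [mul_comm]
    have h2 : ∀ i ∈ Finset.Ico p q, c = f i := by
      have := (Finset.sum_eq_sum_iff_of_le hqle).mp ?_
      · exact fun i hi => this i hi
      · rw [hTe, Finset.sum_const, Nat.card_Ico, nsmul_eq_mul,
          Nat.cast_sub (le_of_lt hpq)]
    intro i hi
    by_cases h : i < p
    · exact h1 i (Finset.mem_range.mpr h)
    · exact (h2 i (Finset.mem_Ico.mpr ⟨by omega, hi⟩)).symm
  intro i j hi hj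
  have h1 := hall i (by omega)
  have h2 := hall j (by omega)
  rw [hfη i i.isLt] at h1
  rw [hfη j j.isLt] at h2
  simp only [Fin.eta] at h1 h2
  rw [h1, h2]
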